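/- Let U be a finite universe with |U| = n ≥ 3, let 𝒞 be a finite collection of subsets of U with costs c(S) ≥ 0, and let π be a probability distribution on the subsets of U. Suppose nonnegative reals (y^S_B)_{S∈𝒞, B⊆S} satisfy: (i) for every u ∈ U, ∑_{S∈𝒞} ∑_{B⊆S, u∈B} y^S_B ≥ 1, and (ii) for every S ∈ 𝒞, ∑_{B⊆S} y^S_B = 1. Then there exists a mapping φ : U → 𝒞 with u ∈ φ(u) for all u ∈ U such that ∑_{S∈𝒞} c(S)·g_π(φ⁻¹(S)) ≤ 4·ln n · ∑_{S∈𝒞} c(S) ∑_{B⊆S} y^S_B · g_π(B). -/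

import Mathlib

open Finset

/-- `gpi π B = P_{X ∼ π}[B ∩ X ≠ ∅]`. -/
noncomputable def gpi {U : Type*} [Fintype U] [DecidableEq U]
    (π : Finset U → ℝ) (B : Finset U) : ℝ :=
  ∑ X ∈ Finset.univ.filter (fun X : Finset U => (X ∩ B).Nonempty), π X

section Helpers

variable {U : Type*} [Fintype U] [DecidableEq U] {π : Finset U → ℝ}

lemma gpi_nonneg (hπ : ∀ X, 0 ≤ π X) (B : Finset U) : 0 ≤ gpi π B :=
  Finset.sum_nonneg fun X _ => hπ X

lemma gpi_mono (hπ : ∀ X, 0 ≤ π X) {A B : Finset U} (h : A ⊆ B) :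
    gpi π A ≤ gpi π B := by
  apply Finset.sum_le_sum_of_subset_of_nonneg
  · intro X hX
    simp only [mem_filter, mem_univ, true_and] at hX ⊢
    exact hX.mono (Finset.inter_subset_inter (le_refl X) h)
  · intro X _ _; exact hπ X

lemma gpi_empty : gpi π (∅ : Finset U) = 0 := by
  simp [gpi]

lemma gpi_union_le (hπ : ∀ X, 0 ≤ π X) (A B : Finset U) :
    gpi π (A ∪ B) ≤ gpi π A + gpi π B := by
  classical
  unfold gpi
  rw [← Finset.sum_union_inter]
  have h1 : (Finset.univ.filter fun X : Finset U => (X ∩ (A ∪ B)).Nonempty) ⊆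
      (Finset.univ.filter fun X : Finset U => (X ∩ A).Nonempty) ∪
      (Finset.univ.filter fun X : Finset U => (X ∩ B).Nonempty) := by
    intro X hX
    simp only [mem_filter, mem_univ, true_and, mem_union, inter_union_distrib_left] at hX ⊢
    rcases hX with ⟨x, hx⟩
    rcases Finset.mem_union.1 hx with h | h
    · exact Or.inl ⟨x, h⟩
    · exact Or.inr ⟨x, h⟩
  have := Finset.sum_le_sum_of_subset_of_nonneg h1 (fun X _ _ => hπ X)
  have h2 : (0:ℝ) ≤ ∑ X ∈ (Finset.univ.filter fun X : Finset U => (X ∩ A).Nonempty) ∩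
      (Finset.univ.filter fun X : Finset U => (X ∩ B).Nonempty), π X :=
    Finset.sum_nonneg fun X _ => hπ X
  linarith

lemma gpi_biUnion_le (hπ : ∀ X, 0 ≤ π X) {ι : Type*} [DecidableEq ι] (s : Finset ι)
    (t : ι → Finset U) : gpi π (s.biUnion t) ≤ ∑ i ∈ s, gpi π (t i) := by
  classical
  induction s using Finset.cons_induction with
  | empty => simp [gpi_empty]
  | cons a s ha ih =>
    rw [Finset.cons_eq_insert, Finset.biUnion_insert, Finset.sum_insert ha]
    exact le_trans (gpi_union_le hπ _ _) (by linarith)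

lemma gpi_le_sum_singleton (hπ : ∀ X, 0 ≤ π X) (A : Finset U) :
    gpi π A ≤ ∑ u ∈ A, gpi π {u} := by
  have h : A = A.biUnion (fun u => {u}) := by simp
  calc gpi π A = gpi π (A.biUnion fun u => {u}) := by rw [← h]
    _ ≤ _ := gpi_biUnion_le hπ A _

lemma sum_prod_eq_prod_sum {U : Type*} [Fintype U] [DecidableEq U]
    {ι : Type*} [Fintype ι] [DecidableEq ι] (f : ι → Finset U → ℝ) :
    ∑ ω : ι → Finset U, ∏ i, f i (ω i) = ∏ i, ∑ B : Finset U, f i B := by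
  classical
  have := Finset.prod_univ_sum (fun _ : ι => (Finset.univ : Finset (Finset U))) f
  rw [Fintype.piFinset_univ] at this
  exact this.symm

end Helpers

/-- A feasible fractional solution to the configuration LP for universal stochastic set
cover, normalized so that for each `S ∈ 𝒞` the values `(y^S_B)_{B⊆S}` form a probability
distribution, can be rounded to a mapping `φ` of expected cost at most `4·ln n` times the
fractional cost (where `n = |U| ≥ 3`). -/
theorem stmt5 {U : Type*} [Fintype U] [DecidableEq U]
    (hn : 3 ≤ Fintype.card U)
    (𝒞 : Finset (Finset U)) (c : Finset U → ℝ) (hc : ∀ S ∈ 𝒞, 0 ≤ c S)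
    (π : Finset U → ℝ) (hπ : ∀ X, 0 ≤ π X) (hsum : ∑ X : Finset U, π X = 1)
    (y : Finset U → Finset U → ℝ) (hy : ∀ S B : Finset U, 0 ≤ y S B)
    (hfeas : ∀ u : U,
      1 ≤ ∑ S ∈ 𝒞, ∑ B ∈ S.powerset.filter (fun B : Finset U => u ∈ B), y S B)
    (hprob : ∀ S ∈ 𝒞, ∑ B ∈ S.powerset, y S B = 1) :
    ∃ φ : U → Finset U, (∀ u : U, φ u ∈ 𝒞 ∧ u ∈ φ u) ∧
      ∑ S ∈ 𝒞, c S * gpi π (Finset.univ.filter (fun u : U => φ u = S)) ≤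
        4 * Real.log (Fintype.card U) *
          ∑ S ∈ 𝒞, c S * ∑ B ∈ S.powerset, y S B * gpi π B := by
  classical
  set n : ℕ := Fintype.card U with hnn
  have hn3 : (3:ℝ) ≤ (n:ℝ) := by exact_mod_cast hn
  have hnpos : (0:ℝ) < (n:ℝ) := by linarith
  have hlog1 : 1 < Real.log n := by
    rw [Real.lt_log_iff_exp_lt hnpos]
    calc Real.exp 1 < 2.7182818286 := Real.exp_one_lt_d9
      _ ≤ (n:ℝ) := by norm_num; linarith
  set T : ℕ := ⌈Real.log n⌉₊ with hTT
  have hT1 : Real.log n ≤ (T:ℝ) := Nat.le_ceil _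
  have hT2 : (T:ℝ) ≤ Real.log n + 1 := le_of_lt (Nat.ceil_lt_add_one (by linarith))
  -- the fractional optimum
  set frac : ℝ := ∑ S ∈ 𝒞, c S * ∑ B ∈ S.powerset, y S B * gpi π B with hfracdef
  have hfrac0 : 0 ≤ frac := by
    apply Finset.sum_nonneg; intro S hS
    exact mul_nonneg (hc S hS) (Finset.sum_nonneg fun B _ =>
      mul_nonneg (hy S B) (gpi_nonneg hπ B))
  -- the fallback map f
  have hDex : ∀ u : U, ∃ S, S ∈ 𝒞 ∧ u ∈ S ∧
      ∀ S' ∈ 𝒞, ∀ B ∈ S'.powerset, u ∈ B → y S' B ≠ 0 → c S ≤ c S' := by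
    intro u
    set D : Finset (Finset U) :=
      𝒞.filter (fun S => ∃ B ∈ S.powerset, u ∈ B ∧ y S B ≠ 0) with hD
    have hDne : D.Nonempty := by
      by_contra hemp
      rw [Finset.not_nonempty_iff_eq_empty] at hemp
      have h0 : ∑ S ∈ 𝒞, ∑ B ∈ S.powerset.filter (fun B : Finset U => u ∈ B), y S B = 0 := by
        apply Finset.sum_eq_zero; intro S hS
        apply Finset.sum_eq_zero; intro B hB
        simp only [mem_filter] at hB
        by_contra hy0
        have : S ∈ D := by
          rw [hD, mem_filter]; exact ⟨hS, B, hB.1, hB.2, hy0⟩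
        simp [hemp] at this
      have := hfeas u
      rw [h0] at this; linarith
    obtain ⟨S, hSD, hSmin⟩ := Finset.exists_min_image D c hDne
    rw [hD, mem_filter] at hSD
    obtain ⟨hS𝒞, B, hBpow, huB, _⟩ := hSD
    refine ⟨S, hS𝒞, (Finset.mem_powerset.1 hBpow) huB, ?_⟩
    intro S' hS' B' hB' huB' hyne
    exact hSmin S' (by rw [hD, mem_filter]; exact ⟨hS', B', hB', huB', hyne⟩)
  choose f hf𝒞 hfu hfmin using hDex
  -- per-element fractional bound for the fallback
  have hMu : ∀ u : U, c (f u) * gpi π {u} ≤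
      ∑ S ∈ 𝒞, ∑ B ∈ S.powerset.filter (fun B : Finset U => u ∈ B),
        y S B * (c S * gpi π B) := by
    intro u
    have hX0 : 0 ≤ c (f u) * gpi π {u} :=
      mul_nonneg (hc _ (hf𝒞 u)) (gpi_nonneg hπ _)
    calc c (f u) * gpi π {u} = 1 * (c (f u) * gpi π {u}) := by ring
      _ ≤ (∑ S ∈ 𝒞, ∑ B ∈ S.powerset.filter (fun B : Finset U => u ∈ B), y S B) *
            (c (f u) * gpi π {u}) := mul_le_mul_of_nonneg_right (hfeas u) hX0
      _ = ∑ S ∈ 𝒞, ∑ B ∈ S.powerset.filter (fun B : Finset U => u ∈ B),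
            y S B * (c (f u) * gpi π {u}) := by
          rw [Finset.sum_mul]; exact Finset.sum_congr rfl fun S _ => Finset.sum_mul ..
      _ ≤ _ := by
          apply Finset.sum_le_sum; intro S hS
          apply Finset.sum_le_sum; intro B hB
          simp only [mem_filter] at hB
          rcases eq_or_ne (y S B) 0 with h0 | h0
          · rw [h0]; ring_nf; exact le_refl _
          · apply mul_le_mul_of_nonneg_left _ (hy S B)
            apply mul_le_mul (hfmin u S hS B hB.1 hB.2 h0)
              (gpi_mono hπ (Finset.singleton_subset_iff.2 hB.2))
              (gpi_nonneg hπ _) (hc S hS)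
  -- total fallback cost is at most n * frac
  have hM : ∑ u : U, c (f u) * gpi π {u} ≤ (n:ℝ) * frac := by
    calc ∑ u : U, c (f u) * gpi π {u}
        ≤ ∑ u : U, ∑ S ∈ 𝒞, ∑ B ∈ S.powerset.filter (fun B : Finset U => u ∈ B),
            y S B * (c S * gpi π B) := Finset.sum_le_sum fun u _ => hMu u
      _ = ∑ S ∈ 𝒞, ∑ u : U, ∑ B ∈ S.powerset.filter (fun B : Finset U => u ∈ B),
            y S B * (c S * gpi π B) := Finset.sum_comm
      _ = ∑ S ∈ 𝒞, ∑ B ∈ S.powerset, (B.card : ℝ) * (y S B * (c S * gpi π B)) := by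
          apply Finset.sum_congr rfl; intro S hS
          have : ∀ u : U, ∑ B ∈ S.powerset.filter (fun B : Finset U => u ∈ B),
              y S B * (c S * gpi π B)
              = ∑ B ∈ S.powerset, if u ∈ B then y S B * (c S * gpi π B) else 0 :=
            fun u => Finset.sum_filter _ _
          simp_rw [this]
          rw [Finset.sum_comm]
          apply Finset.sum_congr rfl; intro B hB
          rw [Finset.sum_ite_mem, Finset.univ_inter, Finset.sum_const, nsmul_eq_mul]
      _ ≤ ∑ S ∈ 𝒞, ∑ B ∈ S.powerset, (n:ℝ) * (y S B * (c S * gpi π B)) := by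
          apply Finset.sum_le_sum; intro S hS
          apply Finset.sum_le_sum; intro B hB
          apply mul_le_mul_of_nonneg_right
          · exact_mod_cast Finset.card_le_univ B
          · exact mul_nonneg (hy S B) (mul_nonneg (hc S hS) (gpi_nonneg hπ B))
      _ = (n:ℝ) * frac := by
          rw [hfracdef, Finset.mul_sum]
          apply Finset.sum_congr rfl; intro S hS
          rw [Finset.mul_sum, Finset.mul_sum]
          apply Finset.sum_congr rfl; intro B hB
          ring
  -- the probability space: independent samples ω (S,t) ~ y^S for t < T
  set q : Finset U × Fin T → Finset U → ℝ := fun i B =>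
    if i.1 ∈ 𝒞 then (if B ⊆ i.1 then y i.1 B else 0) else (if B = ∅ then 1 else 0)
    with hqdef
  have hq0 : ∀ i B, 0 ≤ q i B := by
    intro i B; rw [hqdef]; dsimp only; split_ifs <;> first | exact hy _ _ | norm_num
  have hfil : ∀ S : Finset U, (Finset.univ.filter (fun B : Finset U => B ⊆ S)) = S.powerset := by
    intro S; ext B; simp
  have hq1 : ∀ i, ∑ B : Finset U, q i B = 1 := by
    intro i; rw [hqdef]; dsimp only
    by_cases hi : i.1 ∈ 𝒞
    · simp only [if_pos hi]
      rw [← Finset.sum_filter, hfil, hprob i.1 hi]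
    · simp [if_neg hi]
  set w : (Finset U × Fin T → Finset U) → ℝ := fun ω => ∏ i, q i (ω i) with hwdef
  have hw0 : ∀ ω, 0 ≤ w ω := fun ω => Finset.prod_nonneg fun i _ => hq0 i (ω i)
  have hwsum : ∑ ω : Finset U × Fin T → Finset U, w ω = 1 := by
    rw [hwdef]
    rw [sum_prod_eq_prod_sum (fun i B => q i B)]
    rw [Finset.prod_congr rfl fun i _ => hq1 i, Finset.prod_const_one]
  -- expectation of a product of coordinatewise functions
  have hE : ∀ g : Finset U × Fin T → Finset U → ℝ,
      ∑ ω : Finset U × Fin T → Finset U, w ω * ∏ i, g i (ω i)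
        = ∏ i, ∑ B : Finset U, q i B * g i B := by
    intro g
    rw [← sum_prod_eq_prod_sum (fun i B => q i B * g i B)]
    apply Finset.sum_congr rfl; intro ω _
    rw [hwdef]; dsimp only; rw [← Finset.prod_mul_distrib]
  -- expectation of a single-coordinate function
  have hE1 : ∀ (i₀ : Finset U × Fin T) (h : Finset U → ℝ),
      ∑ ω : Finset U × Fin T → Finset U, w ω * h (ω i₀)
        = ∑ B : Finset U, q i₀ B * h B := by
    intro i₀ h
    have key : ∑ ω : Finset U × Fin T → Finset U,
        w ω * ∏ i, (if i = i₀ then h (ω i) else 1)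
          = ∏ i, ∑ B : Finset U, q i B * (if i = i₀ then h B else 1) :=
      hE (fun i B => if i = i₀ then h B else 1)
    have l1 : ∀ ω : Finset U × Fin T → Finset U,
        (∏ i, (if i = i₀ then h (ω i) else 1)) = h (ω i₀) := by
      intro ω
      rw [Finset.prod_ite_eq' Finset.univ i₀ (fun i => h (ω i))]
      simp
    have l2 : (∏ i, ∑ B : Finset U, q i B * (if i = i₀ then h B else 1))
        = ∑ B : Finset U, q i₀ B * h B := by
      rw [Finset.prod_eq_single i₀]
      · simp
      · intro b _ hb
        simp only [if_neg hb, mul_one]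
        exact hq1 b
      · intro hb; exact absurd (Finset.mem_univ i₀) hb
    simp_rw [l1] at key
    rw [key, l2]
  -- probability that u is uncovered is at most exp(-T)
  have huncov : ∀ u : U, ∑ ω : Finset U × Fin T → Finset U,
      w ω * ∏ i, (if u ∈ ω i then (0:ℝ) else 1) ≤ Real.exp (-(T:ℝ)) := by
    intro u
    rw [hE (fun i B => if u ∈ B then (0:ℝ) else 1)]
    set p : Finset U × Fin T → ℝ := fun i =>
      if i.1 ∈ 𝒞 then ∑ B ∈ i.1.powerset.filter (fun B : Finset U => u ∈ B), y i.1 B else 0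
      with hpdef
    have hp0 : ∀ i, 0 ≤ p i := by
      intro i; rw [hpdef]; dsimp only; split_ifs
      · exact Finset.sum_nonneg fun B _ => hy _ B
      · exact le_refl 0
    have hp1 : ∀ i, p i ≤ 1 := by
      intro i; rw [hpdef]; dsimp only; split_ifs with hi
      · rw [← hprob i.1 hi]
        exact Finset.sum_le_sum_of_subset_of_nonneg (Finset.filter_subset _ _)
          (fun B _ _ => hy _ B)
      · norm_num
    have claim1 : ∀ i, (∑ B : Finset U, q i B * (if u ∈ B then (0:ℝ) else 1)) = 1 - p i := by
      intro i
      by_cases hi : i.1 ∈ 𝒞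
      · have hterm : ∀ B : Finset U, q i B * (if u ∈ B then (0:ℝ) else 1)
            = q i B - (if B ∈ i.1.powerset.filter (fun B : Finset U => u ∈ B)
                then y i.1 B else 0) := by
          intro B
          rw [hqdef]; dsimp only; rw [if_pos hi]
          by_cases h1 : B ⊆ i.1 <;> by_cases h2 : u ∈ B <;>
            simp [Finset.mem_filter, Finset.mem_powerset, h1, h2]
        rw [Finset.sum_congr rfl (fun B _ => hterm B), Finset.sum_sub_distrib, hq1 i,
          Finset.sum_ite_mem, Finset.univ_inter, hpdef]
        dsimp only; rw [if_pos hi]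
      · have hterm : ∀ B : Finset U, q i B * (if u ∈ B then (0:ℝ) else 1)
            = (if B = ∅ then (if u ∈ B then (0:ℝ) else 1) else 0) := by
          intro B
          rw [hqdef]; dsimp only; rw [if_neg hi]
          split_ifs <;> ring
        rw [Finset.sum_congr rfl (fun B _ => hterm B),
          Finset.sum_ite_eq' Finset.univ (∅ : Finset U)
            (fun B => if u ∈ B then (0:ℝ) else 1)]
        simp [hpdef, hi]
    have hTsum : (T:ℝ) ≤ ∑ i : Finset U × Fin T, p i := by
      rw [Fintype.sum_prod_type]
      have : ∀ S : Finset U, ∑ t : Fin T, p (S, t)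
          = (T:ℝ) * (if S ∈ 𝒞 then
              ∑ B ∈ S.powerset.filter (fun B : Finset U => u ∈ B), y S B else 0) := by
        intro S
        have hpst : ∀ t : Fin T, p (S, t) = (if S ∈ 𝒞 then
            ∑ B ∈ S.powerset.filter (fun B : Finset U => u ∈ B), y S B else 0) :=
          fun t => rfl
        rw [Finset.sum_congr rfl (fun t _ => hpst t), Finset.sum_const, Finset.card_univ,
          Fintype.card_fin, nsmul_eq_mul]
      rw [Finset.sum_congr rfl (fun S _ => this S), ← Finset.mul_sum,
        Finset.sum_ite_mem, Finset.univ_inter]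
      have hT0 : (0:ℝ) ≤ (T:ℝ) := Nat.cast_nonneg T
      calc (T:ℝ) = (T:ℝ) * 1 := by ring
        _ ≤ _ := mul_le_mul_of_nonneg_left (hfeas u) hT0
    calc (∏ i, ∑ B : Finset U, q i B * (if u ∈ B then (0:ℝ) else 1))
        = ∏ i, (1 - p i) := Finset.prod_congr rfl (fun i _ => claim1 i)
      _ ≤ ∏ i, Real.exp (-(p i)) := by
          apply Finset.prod_le_prod
          · intro i _; have := hp1 i; linarith
          · intro i _; have := Real.add_one_le_exp (-(p i)); linarith
      _ = Real.exp (∑ i, -(p i)) := (Real.exp_sum _ _).symm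
      _ ≤ Real.exp (-(T:ℝ)) := by
          apply Real.exp_le_exp.2
          rw [Finset.sum_neg_distrib]
          linarith [hTsum]
  -- the uncovered predicate and the rounding map
  set Unc : U → (Finset U × Fin T → Finset U) → Prop := fun u ω =>
    ¬ ∃ S, (S ∈ 𝒞 ∧ u ∈ S) ∧ ∃ t : Fin T, u ∈ ω (S, t) with hUncdef
  set Φ : (Finset U × Fin T → Finset U) → U → Finset U := fun ω u =>
    if h : ∃ S, (S ∈ 𝒞 ∧ u ∈ S) ∧ ∃ t : Fin T, u ∈ ω (S, t) then h.choose else f u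
    with hΦdef
  have hΦmem : ∀ ω u, Φ ω u ∈ 𝒞 ∧ u ∈ Φ ω u := by
    intro ω u
    rw [hΦdef]; dsimp only
    split_ifs with h
    · exact ⟨h.choose_spec.1.1, h.choose_spec.1.2⟩
    · exact ⟨hf𝒞 u, hfu u⟩
  set Cost : (Finset U × Fin T → Finset U) → ℝ := fun ω =>
    ∑ S ∈ 𝒞, c S * gpi π (Finset.univ.filter (fun u : U => Φ ω u = S)) with hCostdef
  -- pointwise cost bound
  have hCost : ∀ ω, Cost ω ≤
      (∑ S ∈ 𝒞, ∑ t : Fin T, c S * gpi π (ω (S, t))) +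
      ∑ u : U, (if Unc u ω then c (f u) * gpi π {u} else 0) := by
    intro ω
    have hpre : ∀ S ∈ 𝒞, Finset.univ.filter (fun u : U => Φ ω u = S) ⊆
        ((Finset.univ : Finset (Fin T)).biUnion fun t => ω (S, t)) ∪
        (Finset.univ.filter (fun u : U => Unc u ω ∧ f u = S)) := by
      intro S hS u hu
      rw [mem_filter] at hu
      have hu2 := hu.2
      rw [hΦdef] at hu2; dsimp only at hu2
      by_cases h : ∃ S', (S' ∈ 𝒞 ∧ u ∈ S') ∧ ∃ t : Fin T, u ∈ ω (S', t)
      · rw [dif_pos h] at hu2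
        obtain ⟨t, ht⟩ := h.choose_spec.2
        apply Finset.mem_union_left
        exact Finset.mem_biUnion.2 ⟨t, Finset.mem_univ t, by rwa [hu2] at ht⟩
      · rw [dif_neg h] at hu2
        apply Finset.mem_union_right
        rw [mem_filter]
        exact ⟨Finset.mem_univ u, h, hu2⟩
    have hperS : ∀ S ∈ 𝒞, c S * gpi π (Finset.univ.filter (fun u : U => Φ ω u = S)) ≤
        (∑ t : Fin T, c S * gpi π (ω (S, t))) +
        ∑ u ∈ Finset.univ.filter (fun u : U => Unc u ω ∧ f u = S), c S * gpi π {u} := by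
      intro S hS
      have h1 : gpi π (Finset.univ.filter (fun u : U => Φ ω u = S)) ≤
          (∑ t : Fin T, gpi π (ω (S, t))) +
          ∑ u ∈ Finset.univ.filter (fun u : U => Unc u ω ∧ f u = S), gpi π {u} :=
        calc gpi π (Finset.univ.filter (fun u : U => Φ ω u = S))
            ≤ gpi π (((Finset.univ : Finset (Fin T)).biUnion fun t => ω (S, t)) ∪
                (Finset.univ.filter (fun u : U => Unc u ω ∧ f u = S))) :=
              gpi_mono hπ (hpre S hS)
          _ ≤ gpi π ((Finset.univ : Finset (Fin T)).biUnion fun t => ω (S, t)) +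
                gpi π (Finset.univ.filter (fun u : U => Unc u ω ∧ f u = S)) :=
              gpi_union_le hπ _ _
          _ ≤ _ := add_le_add (gpi_biUnion_le hπ _ _) (gpi_le_sum_singleton hπ _)
      calc c S * gpi π (Finset.univ.filter (fun u : U => Φ ω u = S))
          ≤ c S * ((∑ t : Fin T, gpi π (ω (S, t))) +
              ∑ u ∈ Finset.univ.filter (fun u : U => Unc u ω ∧ f u = S), gpi π {u}) :=
            mul_le_mul_of_nonneg_left h1 (hc S hS)
        _ = _ := by rw [mul_add, Finset.mul_sum, Finset.mul_sum]
    have hsecond : ∑ S ∈ 𝒞, ∑ u ∈ Finset.univ.filter (fun u : U => Unc u ω ∧ f u = S),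
        c S * gpi π {u} ≤ ∑ u : U, (if Unc u ω then c (f u) * gpi π {u} else 0) := by
      have hdisj : (↑𝒞 : Set (Finset U)).PairwiseDisjoint
          (fun S => Finset.univ.filter (fun u : U => Unc u ω ∧ f u = S)) := by
        intro S1 _ S2 _ hne
        rw [Function.onFun, Finset.disjoint_left]
        intro u h1 h2
        rw [mem_filter] at h1 h2
        exact hne (h1.2.2 ▸ h2.2.2)
      have hrw : ∀ S ∈ 𝒞, ∑ u ∈ Finset.univ.filter (fun u : U => Unc u ω ∧ f u = S),
          c S * gpi π {u}
          = ∑ u ∈ Finset.univ.filter (fun u : U => Unc u ω ∧ f u = S),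
            (if Unc u ω then c (f u) * gpi π {u} else 0) := by
        intro S hS
        apply Finset.sum_congr rfl
        intro u hu
        rw [mem_filter] at hu
        rw [if_pos hu.2.1, hu.2.2]
      rw [Finset.sum_congr rfl hrw, ← Finset.sum_biUnion hdisj]
      apply Finset.sum_le_sum_of_subset_of_nonneg (Finset.subset_univ _)
      intro u _ _
      split_ifs
      · exact mul_nonneg (hc _ (hf𝒞 u)) (gpi_nonneg hπ _)
      · exact le_refl 0
    calc Cost ω ≤ ∑ S ∈ 𝒞, ((∑ t : Fin T, c S * gpi π (ω (S, t))) +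
          ∑ u ∈ Finset.univ.filter (fun u : U => Unc u ω ∧ f u = S), c S * gpi π {u}) :=
        Finset.sum_le_sum hperS
      _ = (∑ S ∈ 𝒞, ∑ t : Fin T, c S * gpi π (ω (S, t))) +
          ∑ S ∈ 𝒞, ∑ u ∈ Finset.univ.filter (fun u : U => Unc u ω ∧ f u = S),
            c S * gpi π {u} := Finset.sum_add_distrib
      _ ≤ _ := add_le_add (le_refl _) hsecond
  -- expectation of the main term
  have hEA : ∑ ω : Finset U × Fin T → Finset U,
      w ω * (∑ S ∈ 𝒞, ∑ t : Fin T, c S * gpi π (ω (S, t))) = (T:ℝ) * frac := by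
    have swap : ∑ ω : Finset U × Fin T → Finset U,
        w ω * (∑ S ∈ 𝒞, ∑ t : Fin T, c S * gpi π (ω (S, t)))
        = ∑ S ∈ 𝒞, ∑ t : Fin T, ∑ ω : Finset U × Fin T → Finset U,
            w ω * (c S * gpi π (ω (S, t))) := by
      calc ∑ ω : Finset U × Fin T → Finset U,
          w ω * (∑ S ∈ 𝒞, ∑ t : Fin T, c S * gpi π (ω (S, t)))
          = ∑ ω : Finset U × Fin T → Finset U, ∑ S ∈ 𝒞, ∑ t : Fin T,
              w ω * (c S * gpi π (ω (S, t))) := by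
            apply Finset.sum_congr rfl; intro ω _
            rw [Finset.mul_sum]
            exact Finset.sum_congr rfl fun S _ => Finset.mul_sum ..
        _ = ∑ S ∈ 𝒞, ∑ ω : Finset U × Fin T → Finset U, ∑ t : Fin T,
              w ω * (c S * gpi π (ω (S, t))) := Finset.sum_comm
        _ = _ := Finset.sum_congr rfl fun S _ => Finset.sum_comm
    rw [swap]
    have inner : ∀ S ∈ 𝒞, ∀ t : Fin T, ∑ ω : Finset U × Fin T → Finset U,
        w ω * (c S * gpi π (ω (S, t))) = c S * ∑ B ∈ S.powerset, y S B * gpi π B := by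
      intro S hS t
      rw [hE1 (S, t) (fun B => c S * gpi π B)]
      have hq' : ∀ B : Finset U, q (S, t) B * (c S * gpi π B)
          = (if B ⊆ S then y S B * (c S * gpi π B) else 0) := by
        intro B
        by_cases hB : B ⊆ S <;> simp [hqdef, hS, hB]
      rw [Finset.sum_congr rfl (fun B _ => hq' B), ← Finset.sum_filter, hfil S,
        Finset.mul_sum]
      apply Finset.sum_congr rfl; intro B _; ring
    calc ∑ S ∈ 𝒞, ∑ t : Fin T, ∑ ω : Finset U × Fin T → Finset U,
          w ω * (c S * gpi π (ω (S, t)))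
        = ∑ S ∈ 𝒞, ∑ _t : Fin T, c S * ∑ B ∈ S.powerset, y S B * gpi π B :=
          Finset.sum_congr rfl fun S hS => Finset.sum_congr rfl fun t _ => inner S hS t
      _ = ∑ S ∈ 𝒞, (T:ℝ) * (c S * ∑ B ∈ S.powerset, y S B * gpi π B) := by
          apply Finset.sum_congr rfl; intro S _
          rw [Finset.sum_const, Finset.card_univ, Fintype.card_fin, nsmul_eq_mul]
      _ = (T:ℝ) * frac := by rw [hfracdef, Finset.mul_sum]
  -- pointwise bound for the fallback term
  have huncpt : ∀ (u : U) (ω : Finset U × Fin T → Finset U),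
      w ω * (if Unc u ω then c (f u) * gpi π {u} else 0)
      ≤ (c (f u) * gpi π {u}) * (w ω * ∏ i, (if u ∈ ω i then (0:ℝ) else 1)) := by
    intro u ω
    have hX0 : 0 ≤ c (f u) * gpi π {u} := mul_nonneg (hc _ (hf𝒞 u)) (gpi_nonneg hπ _)
    have hI0 : 0 ≤ ∏ i : Finset U × Fin T, (if u ∈ ω i then (0:ℝ) else 1) := by
      apply Finset.prod_nonneg; intro i _; split_ifs <;> norm_num
    by_cases hU : Unc u ω
    · rw [if_pos hU]
      rcases eq_or_ne (w ω) 0 with h0 | h0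
      · rw [h0]; simp
      · have hIone : (∏ i : Finset U × Fin T, (if u ∈ ω i then (0:ℝ) else 1)) = 1 := by
          apply Finset.prod_eq_one; intro i _
          have hnotmem : u ∉ ω i := by
            intro hmem
            have hq : q i (ω i) ≠ 0 := by
              have h0' : (∏ j : Finset U × Fin T, q j (ω j)) ≠ 0 := by
                rw [hwdef] at h0; exact h0
              exact Finset.prod_ne_zero_iff.1 h0' i (Finset.mem_univ i)
            rw [hUncdef] at hU
            by_cases hi : i.1 ∈ 𝒞
            · have hsub : ω i ⊆ i.1 := by
                by_contra hns
                apply hq; rw [hqdef]; dsimp only; rw [if_pos hi, if_neg hns]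
              exact hU ⟨i.1, ⟨hi, hsub hmem⟩, ⟨i.2, by rwa [Prod.mk.eta]⟩⟩
            · have hempty : ω i = ∅ := by
                by_contra hne
                apply hq; rw [hqdef]; dsimp only; rw [if_neg hi, if_neg hne]
              rw [hempty] at hmem; exact absurd hmem (Finset.notMem_empty u)
          rw [if_neg hnotmem]
        rw [hIone, mul_one, mul_comm]
    · rw [if_neg hU, mul_zero]
      exact mul_nonneg hX0 (mul_nonneg (hw0 ω) hI0)
  -- expectation of the fallback term
  have hEB : ∑ ω : Finset U × Fin T → Finset U,
      w ω * (∑ u : U, if Unc u ω then c (f u) * gpi π {u} else 0) ≤ frac := by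
    calc ∑ ω : Finset U × Fin T → Finset U,
        w ω * (∑ u : U, if Unc u ω then c (f u) * gpi π {u} else 0)
        = ∑ u : U, ∑ ω : Finset U × Fin T → Finset U,
            w ω * (if Unc u ω then c (f u) * gpi π {u} else 0) := by
          rw [Finset.sum_comm]
          apply Finset.sum_congr rfl; intro ω _
          exact Finset.mul_sum ..
      _ ≤ ∑ u : U, (c (f u) * gpi π {u}) * Real.exp (-(T:ℝ)) := by
          apply Finset.sum_le_sum; intro u _
          have hX0 : 0 ≤ c (f u) * gpi π {u} :=
            mul_nonneg (hc _ (hf𝒞 u)) (gpi_nonneg hπ _)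
          calc ∑ ω : Finset U × Fin T → Finset U,
              w ω * (if Unc u ω then c (f u) * gpi π {u} else 0)
              ≤ ∑ ω : Finset U × Fin T → Finset U, (c (f u) * gpi π {u}) *
                  (w ω * ∏ i, (if u ∈ ω i then (0:ℝ) else 1)) :=
                Finset.sum_le_sum fun ω _ => huncpt u ω
            _ = (c (f u) * gpi π {u}) * ∑ ω : Finset U × Fin T → Finset U,
                  w ω * ∏ i, (if u ∈ ω i then (0:ℝ) else 1) := by
                rw [Finset.mul_sum]
            _ ≤ (c (f u) * gpi π {u}) * Real.exp (-(T:ℝ)) :=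
                mul_le_mul_of_nonneg_left (huncov u) hX0
      _ = Real.exp (-(T:ℝ)) * ∑ u : U, c (f u) * gpi π {u} := by
          rw [← Finset.sum_mul, mul_comm]
      _ ≤ Real.exp (-(T:ℝ)) * ((n:ℝ) * frac) :=
          mul_le_mul_of_nonneg_left hM (Real.exp_nonneg _)
      _ ≤ frac := by
          have h1 : Real.exp (-(T:ℝ)) ≤ (n:ℝ)⁻¹ := by
            calc Real.exp (-(T:ℝ)) ≤ Real.exp (-(Real.log n)) :=
                Real.exp_le_exp.2 (by linarith)
              _ = (n:ℝ)⁻¹ := by rw [Real.exp_neg, Real.exp_log hnpos]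
          calc Real.exp (-(T:ℝ)) * ((n:ℝ) * frac) ≤ (n:ℝ)⁻¹ * ((n:ℝ) * frac) :=
              mul_le_mul_of_nonneg_right h1 (mul_nonneg (le_of_lt hnpos) hfrac0)
            _ = frac := by field_simp
  -- total expected cost
  have hEcost : ∑ ω : Finset U × Fin T → Finset U, w ω * Cost ω
      ≤ 4 * Real.log n * frac := by
    calc ∑ ω : Finset U × Fin T → Finset U, w ω * Cost ω
        ≤ ∑ ω : Finset U × Fin T → Finset U, w ω *
            ((∑ S ∈ 𝒞, ∑ t : Fin T, c S * gpi π (ω (S, t))) +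
             ∑ u : U, (if Unc u ω then c (f u) * gpi π {u} else 0)) :=
          Finset.sum_le_sum fun ω _ => mul_le_mul_of_nonneg_left (hCost ω) (hw0 ω)
      _ = (∑ ω : Finset U × Fin T → Finset U,
            w ω * (∑ S ∈ 𝒞, ∑ t : Fin T, c S * gpi π (ω (S, t)))) +
          ∑ ω : Finset U × Fin T → Finset U,
            w ω * (∑ u : U, if Unc u ω then c (f u) * gpi π {u} else 0) := by
          rw [← Finset.sum_add_distrib]
          apply Finset.sum_congr rfl; intro ω _; rw [mul_add]
      _ ≤ (T:ℝ) * frac + frac := add_le_add (le_of_eq hEA) hEB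
      _ ≤ 4 * Real.log n * frac := by
          have h1 : (T:ℝ) * frac ≤ (Real.log n + 1) * frac :=
            mul_le_mul_of_nonneg_right hT2 hfrac0
          have h2 : 0 ≤ (3 * Real.log n - 2) * frac :=
            mul_nonneg (by linarith) hfrac0
          nlinarith [h1, h2]
  -- pick a good sample point
  have hex : ∃ ω : Finset U × Fin T → Finset U, Cost ω ≤ 4 * Real.log n * frac := by
    by_contra hcon
    push_neg at hcon
    have hω0 : ∃ ω : Finset U × Fin T → Finset U, w ω ≠ 0 := by
      by_contra hall; push_neg at hall
      simp only [hall] at hwsum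
      simp at hwsum
    obtain ⟨ω₀, hω₀⟩ := hω0
    have hlt : ∑ ω : Finset U × Fin T → Finset U, w ω * (4 * Real.log n * frac)
        < ∑ ω : Finset U × Fin T → Finset U, w ω * Cost ω := by
      apply Finset.sum_lt_sum
      · intro ω _
        rcases eq_or_ne (w ω) 0 with h | h
        · rw [h]; simp
        · exact le_of_lt (mul_lt_mul_of_pos_left (hcon ω)
            (lt_of_le_of_ne (hw0 ω) (Ne.symm h)))
      · exact ⟨ω₀, Finset.mem_univ ω₀, mul_lt_mul_of_pos_left (hcon ω₀)
          (lt_of_le_of_ne (hw0 ω₀) (Ne.symm hω₀))⟩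
    rw [← Finset.sum_mul, hwsum, one_mul] at hlt
    linarith [hEcost]
  obtain ⟨ω₀, hω₀cost⟩ := hex
  exact ⟨Φ ω₀, hΦmem ω₀, hω₀cost⟩
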